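/- In any DAG G, the parents of a vertex y d-separate y from its non-descendants: for the local Markov property, any vertex z that is a non-descendant of y and not a parent of y is d-separated from y given the set of parents of y. -/

import Mathlib

variable {V : Type*}

def dadj (E : V → V → Prop) (a b : V) : Prop := E a b ∨ E b a

/-- A list of vertices is a d-connecting path given a conditioning set `S`:
it is a genuine path (consecutive vertices adjacent, no repeats), every
collider on it has a descendant in `S`, and every non-collider on it is
outside `S`. -/
def DConnecting (E : V → V → Prop) (S : Set V) (p : List V) : Prop :=
  2 ≤ p.length ∧ p.Chain' (dadj E) ∧ p.Nodup ∧
  ∀ a b c : V, [a, b, c] <:+: p →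
    ((E a b ∧ E c b) → ∃ s ∈ S, Relation.ReflTransGen E b s) ∧
    (¬ (E a b ∧ E c b) → b ∉ S)

/-- `u` and `v` are d-separated given `S`: no d-connecting path joins them. -/
def DSep (E : V → V → Prop) (S : Set V) (u v : V) : Prop :=
  ¬ ∃ p : List V, DConnecting E S p ∧ p.head? = some u ∧ p.getLast? = some v

private lemma walk_aux (E : V → V → Prop)
    (hacyc : ∀ v, ¬ Relation.TransGen E v v) (y z : V)
    (hnd : ¬ Relation.ReflTransGen E y z) :
    ∀ (q : List V) (u v : V), Relation.ReflTransGen E y u → E u v →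
      List.Chain' (dadj E) (u :: v :: q) →
      (∀ a b c : V, [a, b, c] <:+: (u :: v :: q) →
        ((E a b ∧ E c b) → ∃ s ∈ {x | E x y}, Relation.ReflTransGen E b s) ∧
        (¬ (E a b ∧ E c b) → b ∉ {x | E x y})) →
      (u :: v :: q).getLast? = some z → False := by
  intro q
  induction q with
  | nil =>
    intro u v hyu huv _ _ hlast
    have hv : v = z := by simpa using hlast
    exact hnd (hv ▸ hyu.tail huv)
  | cons w q' ih =>
    intro u v hyu huv hchain htrip hlast
    have hchain2 : List.Chain' (dadj E) (v :: w :: q') := hchain.tail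
    have hvw : dadj E v w := (List.isChain_cons_cons.mp hchain2).1
    cases hvw with
    | inl hvw =>
      refine ih v w (hyu.tail huv) hvw hchain2 ?_ ?_
      · intro a b c hinf
        exact htrip a b c (hinf.trans (List.suffix_cons u _).isInfix)
      · simpa using hlast
    | inr hwv =>
      have hinf : [u, v, w] <:+: (u :: v :: w :: q') := ⟨[], q', rfl⟩
      obtain ⟨s, hs, hvs⟩ := (htrip u v w hinf).1 ⟨huv, hwv⟩
      exact hacyc y (Relation.TransGen.tail' (((hyu.tail huv).trans hvs)) hs)

/-- Local Markov property, graphical core: in a finite DAG, any non-descendant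
`z` of `y` that is not a parent of `y` is d-separated from `y` given the
parents of `y`. -/
theorem parents_dsep_nondescendants [Fintype V] (E : V → V → Prop)
    (hacyc : ∀ v, ¬ Relation.TransGen E v v)
    (y z : V)
    (hnd : ¬ Relation.ReflTransGen E y z)
    (hnp : ¬ E z y) :
    DSep E {x | E x y} z y := by
  rintro ⟨p, ⟨hlen, hchain, hnodup, htrip⟩, hhead, hlast⟩
  -- work with the reversed path, from y to z
  set q := p.reverse with hq
  have hqhead : q.head? = some y := by
    rw [hq, List.head?_reverse]; exact hlast
  have hqlast : q.getLast? = some z := by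
    rw [hq, List.getLast?_reverse]; exact hhead
  have hqchain : List.Chain' (dadj E) q := by
    rw [hq]
    exact List.isChain_reverse.mpr (hchain.imp (fun a b h => h.symm))
  have hqtrip : ∀ a b c : V, [a, b, c] <:+: q →
      ((E a b ∧ E c b) → ∃ s ∈ {x | E x y}, Relation.ReflTransGen E b s) ∧
      (¬ (E a b ∧ E c b) → b ∉ {x | E x y}) := by
    intro a b c hinf
    have hinf' : [c, b, a] <:+: p := by
      rw [← List.reverse_infix, ← hq]
      simpa using hinf
    have h := htrip c b a hinf'
    constructor
    · intro hcol; exact h.1 ⟨hcol.2, hcol.1⟩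
    · intro hncol; exact h.2 (fun hc => hncol ⟨hc.2, hc.1⟩)
  match q, hqhead, hqlast, hqchain, hqtrip with
  | [_], hqhead, hqlast, hqchain, hqtrip =>
    -- length ≥ 2 rules this out
    have : (2 : ℕ) ≤ 1 := by
      have := hlen
      rw [← List.length_reverse, ← hq] at this
      simp at this
    omega
  | (a :: v :: rest), hqhead, hqlast, hqchain, hqtrip =>
    have ha : a = y := by simpa using hqhead
    subst ha
    have hav : dadj E a v := (List.isChain_cons_cons.mp hqchain).1
    cases hav with
    | inl hav =>
      exact walk_aux E hacyc a z hnd rest a v Relation.ReflTransGen.refl hav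
        hqchain hqtrip hqlast
    | inr hva =>
      -- edge v → y, so v ∈ Pa(y)
      match rest, hqlast, hqtrip with
      | [], hqlast, _ =>
        have hv : v = z := by simpa using hqlast
        exact hnp (hv ▸ hva)
      | (w :: rest'), _, hqtrip =>
        have hinf : [a, v, w] <:+: (a :: v :: w :: rest') := ⟨[], rest', rfl⟩
        by_cases hcol : E a v ∧ E w v
        · exact hacyc a (Relation.TransGen.head hcol.1 (Relation.TransGen.single hva))
        · exact (hqtrip a v w hinf).2 hcol hva
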